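/- Let N be a prime and A ⊆ ℤ/Nℤ a nonempty set. Write D = A − A, and suppose that for some real δ ∈ (0, 1/3) and some r ≠ 0 in ℤ/Nℤ one has |D̂(r)| ≥ |D| − 4δ²|A|, where D̂(r) = Σ_{d∈D} e^(2πi d r / N). Then the diameter of A is less than δN. -/

import Mathlib

set_option maxHeartbeats 1000000

open Real Pointwise

private lemma aux_unit (a b c s : ℝ) (h1 : a^2 + b^2 = 1) (h2 : c^2 + s^2 = 1) :
    a*c + b*s ≤ 1 := by nlinarith [sq_nonneg (a - c), sq_nonneg (b - s)]

private lemma aux_pair (a b α β : ℝ) (hab : a^2 + b^2 = 1) :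
    a * (Real.cos α + Real.cos β) + b * (Real.sin α + Real.sin β) ≤
      2 * |Real.cos ((α - β)/2)| := by
  set m := (α + β)/2 with hm
  set d := (α - β)/2 with hd
  have hα : α = m + d := by rw [hm, hd]; ring
  have hβ : β = m - d := by rw [hm, hd]; ring
  have e1 : Real.cos α + Real.cos β = 2 * Real.cos m * Real.cos d := by
    rw [hα, hβ, Real.cos_add, Real.cos_sub]; ring
  have e2 : Real.sin α + Real.sin β = 2 * Real.sin m * Real.cos d := by
    rw [hα, hβ, Real.sin_add, Real.sin_sub]; ring
  rw [e1, e2]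
  have h1 : a * Real.cos m + b * Real.sin m ≤ 1 :=
    aux_unit _ _ _ _ hab (Real.cos_sq_add_sin_sq m)
  have h2 : -(1:ℝ) ≤ a * Real.cos m + b * Real.sin m := by
    have := aux_unit (-a) (-b) (Real.cos m) (Real.sin m) (by nlinarith) (Real.cos_sq_add_sin_sq m)
    nlinarith
  have key : Real.cos d * (a * Real.cos m + b * Real.sin m) ≤ |Real.cos d| := by
    rcases le_or_gt 0 (Real.cos d) with h | h
    · calc Real.cos d * (a * Real.cos m + b * Real.sin m) ≤ Real.cos d * 1 := by nlinarith
        _ ≤ |Real.cos d| := by rw [mul_one]; exact le_abs_self _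
    · calc Real.cos d * (a * Real.cos m + b * Real.sin m) ≤ Real.cos d * (-1) := by nlinarith
        _ ≤ |Real.cos d| := by rw [abs_of_neg h]; linarith
  nlinarith

private lemma aux_cos_shift (t : ℝ) (k : ℤ) : |Real.cos (t + k * π)| = |Real.cos t| := by
  have h1 : Real.cos (t + k * π) = Real.cos t * Real.cos (k * π) := by
    rw [Real.cos_add, Real.sin_int_mul_pi, mul_zero, sub_zero]
  have h3 := Real.sin_sq_add_cos_sq ((k:ℝ) * π)
  rw [Real.sin_int_mul_pi] at h3
  have h4 : (Real.cos ((k:ℝ) * π) - 1) * (Real.cos ((k:ℝ) * π) + 1) = 0 := by nlinarith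
  have h2 : |Real.cos ((k:ℝ) * π)| = 1 := by
    rcases mul_eq_zero.mp h4 with h | h
    · rw [show Real.cos ((k:ℝ)*π) = 1 by linarith]; norm_num
    · rw [show Real.cos ((k:ℝ)*π) = -1 by linarith]; norm_num
  rw [h1, abs_mul, h2, mul_one]

private lemma aux_val_diff {N : ℕ} [NeZero N] (x y : ZMod N) :
    ∃ k : ℤ, (x.val : ℤ) - y.val = ((x - y).val : ℤ) + N * k := by
  have e1 : ((x.val : ℕ) : ZMod N) = x := ZMod.natCast_rightInverse x
  have e2 : ((y.val : ℕ) : ZMod N) = y := ZMod.natCast_rightInverse y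
  have e3 : (((x - y).val : ℕ) : ZMod N) = x - y := ZMod.natCast_rightInverse (x - y)
  have h : ((((x.val : ℤ) - y.val - ((x - y).val : ℤ)) : ℤ) : ZMod N) = 0 := by
    push_cast
    rw [e1, e2, e3]
    ring
  obtain ⟨k, hk⟩ := (ZMod.intCast_zmod_eq_zero_iff_dvd _ N).mp h
  exact ⟨k, by linarith⟩

private lemma aux_delta (δ : ℝ) (hδ : 0 < δ) (hδ1 : δ < 1/3) :
    4 * δ^2 < 1 - Real.cos (π * δ) := by
  set t := π * δ / 2 with ht
  have hπl : (3.14 : ℝ) < π := Real.pi_gt_d2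
  have hπu : π < (3.15 : ℝ) := Real.pi_lt_d2
  have hπ0 : (0:ℝ) < π := Real.pi_pos
  have ht0 : 0 < t := by rw [ht]; positivity
  have htu : t ≤ π / 6 := by rw [ht]; nlinarith
  have ht1 : t ≤ 1 := by nlinarith
  have hs : t - t^3/4 < Real.sin t := by
    have := Real.sin_gt_sub_cube ht0; nlinarith [pow_pos ht0 3]
  have hrel : π * δ = 2 * t := by rw [ht]; ring
  have hcos : Real.cos (π * δ) = 1 - 2 * Real.sin t ^ 2 := by
    rw [hrel, Real.cos_two_mul]
    have := Real.sin_sq_add_cos_sq t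
    linarith
  rw [hcos]
  have hπ2l : (9.85 : ℝ) < π^2 := by nlinarith
  have hπ2u : π^2 < (9.9225 : ℝ) := by nlinarith
  have ht2 : t^2 ≤ (0.2757 : ℝ) := by
    have h := mul_le_mul htu htu ht0.le (by positivity : (0:ℝ) ≤ π/6)
    nlinarith
  have ht3 : t^3 ≤ t := by nlinarith [sq_nonneg (t-1), sq_nonneg (t+1), ht0.le]
  have hq0 : 0 < t - t^3/4 := by linarith
  have hq2 : (t - t^3/4)^2 < Real.sin t ^ 2 := by nlinarith
  have h5 : t^4 ≤ 0.2757 * t^2 := by nlinarith [sq_nonneg t]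
  have h6 : (t - t^3/4)^2 ≥ t^2 - t^4/2 := by nlinarith [sq_nonneg (t^3)]
  have hδ2 : 0 < δ^2 := by positivity
  have h7 : (9.85 : ℝ) * δ^2 < π^2 * δ^2 := mul_lt_mul_of_pos_right hπ2l hδ2
  have hrel2 : π^2 * δ^2 = 4 * t^2 := by linear_combination (π*δ + 2*t) * hrel
  linarith

private lemma aux_sum_sub {α : Type*} [DecidableEq α] [AddCommGroup α] (A : Finset α) {b : α}
    (hb : b ∈ A) (F : α → ℝ) (h0 : ∀ x, 0 ≤ F x) :
    ∑ a ∈ A, F (a - b) ≤ ∑ x ∈ A - A, F x := by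
  rw [← Finset.sum_image (g := fun a => a - b) (f := F)
    (fun x _ y _ h => by exact sub_left_injective h)]
  apply Finset.sum_le_sum_of_subset_of_nonneg
  · intro x hx
    obtain ⟨a, ha, rfl⟩ := Finset.mem_image.mp hx
    exact Finset.sub_mem_sub ha hb
  · exact fun i _ _ => h0 i

open Pointwise Complex

/-- **Lemma 9** (Green–Ruzsa). Let `N` be prime and `A ⊆ ℤ/Nℤ` nonempty. Write
`D = A − A`, and suppose `|D̂(r)| ≥ |D| − 4δ²|A|` for some `δ ∈ (0, 1/3)` and some
`r ≠ 0`, where `D̂(r) = ∑_{d ∈ D} e(dr/N)`. Then `diam A < δN`, i.e. there are `a, d`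
and `l < δN` with `A ⊆ {a, a+d, …, a+ld}`. -/
theorem diameter_lt_of_large_fourier_coefficient {N : ℕ} (hN : N.Prime)
    (A : Finset (ZMod N)) (hA : A.Nonempty) (δ : ℝ) (hδ : 0 < δ) (hδ1 : δ < 1 / 3)
    (r : ZMod N) (hr : r ≠ 0)
    (hfourier :
      ((A - A).card : ℝ) - 4 * δ ^ 2 * A.card ≤
        ‖∑ x ∈ A - A,
          Complex.exp (2 * Real.pi * Complex.I * ((x * r : ZMod N).val : ℂ) / N)‖) :
    ∃ l : ℕ, (l : ℝ) < δ * N ∧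
      ∃ a d : ZMod N,
        A ⊆ (Finset.range (l + 1)).image (fun i : ℕ => a + (i : ZMod N) * d) := by
  haveI : Fact N.Prime := ⟨hN⟩
  haveI : NeZero N := ⟨hN.pos.ne'⟩
  have hN0 : (0:ℝ) < N := by exact_mod_cast hN.pos
  have hNne : (N:ℝ) ≠ 0 := ne_of_gt hN0
  have hn0 : (0:ℝ) < A.card := by exact_mod_cast Finset.card_pos.mpr hA
  set Z : ℂ := ∑ x ∈ A - A,
      Complex.exp (2 * Real.pi * Complex.I * ((x * r : ZMod N).val : ℂ) / N) with hZdef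
  obtain ⟨u, hu1, hu2⟩ : ∃ u : ℂ, u.re^2 + u.im^2 = 1 ∧
      ((starRingEnd ℂ) u * Z).re = ‖Z‖ := by
    by_cases h0 : Z = 0
    · exact ⟨1, by norm_num, by simp [h0]⟩
    · have hzne : ‖Z‖ ≠ 0 := by simpa using h0
      refine ⟨Z / (‖Z‖ : ℂ), ?_, ?_⟩
      · have habs : ‖Z / (‖Z‖ : ℂ)‖ = 1 := by
          rw [norm_div, Complex.norm_real, Real.norm_eq_abs, _root_.abs_of_nonneg (norm_nonneg Z)]
          exact div_self hzne
        have h := Complex.sq_norm (Z / (‖Z‖ : ℂ))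
        rw [habs, Complex.normSq_apply] at h
        nlinarith [h]
      · rw [map_div₀, Complex.conj_ofReal, div_mul_eq_mul_div, mul_comm, Complex.mul_conj,
          Complex.div_ofReal_re, Complex.ofReal_re, ← Complex.sq_norm, sq]
        field_simp
  set θ : ZMod N → ℝ := fun x => 2 * Real.pi * ((x * r).val : ℝ) / N with hθdef
  set F : ZMod N → ℝ := fun x => 1 - (u.re * Real.cos (θ x) + u.im * Real.sin (θ x)) with hFdef
  have hF0 : ∀ x, 0 ≤ F x := by
    intro x
    have := aux_unit u.re u.im (Real.cos (θ x)) (Real.sin (θ x)) hu1 (Real.cos_sq_add_sin_sq _)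
    simp only [hFdef]
    linarith
  have hexp : ∀ x : ZMod N,
      Complex.exp (2 * Real.pi * Complex.I * ((x * r : ZMod N).val : ℂ) / N)
        = Complex.exp ((θ x : ℝ) * Complex.I) := by
    intro x
    congr 1
    simp only [hθdef]
    push_cast
    ring
  have hre2 : ∀ x : ZMod N, ((starRingEnd ℂ) u * Complex.exp ((θ x : ℝ) * Complex.I)).re
      = u.re * Real.cos (θ x) + u.im * Real.sin (θ x) := by
    intro x
    rw [Complex.mul_re, Complex.exp_ofReal_mul_I_re, Complex.exp_ofReal_mul_I_im]
    simp only [Complex.conj_re, Complex.conj_im]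
    ring
  have hFsum : ∑ x ∈ A - A, F x ≤ 4 * δ^2 * A.card := by
    have e : ∑ x ∈ A - A, F x = ((A - A).card : ℝ) - ((starRingEnd ℂ) u * Z).re := by
      rw [hZdef, Finset.mul_sum, Complex.re_sum]
      simp only [hFdef]
      rw [Finset.sum_sub_distrib, Finset.sum_const, nsmul_eq_mul, mul_one]
      congr 1
      apply Finset.sum_congr rfl
      intro x _
      rw [hexp x, hre2 x]
    rw [e, hu2]
    linarith [hfourier]
  have key : ∀ d ∈ A - A, ((min ((d * r).val) (N - (d * r).val) : ℕ) : ℝ) < δ * N := by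
    intro d hd
    have step1 : 1 - |Real.cos (Real.pi * (((d * r).val : ℕ) : ℝ) / N)| ≤ 4 * δ^2 := by
      obtain ⟨a₁, ha₁, a₂, ha₂, rfl⟩ := Finset.mem_sub.mp hd
      set c := |Real.cos (Real.pi * ((((a₁ - a₂) * r).val : ℕ) : ℝ) / N)| with hc
      have hptw : ∀ a ∈ A, 2 - 2 * c ≤ F (a - a₂) + F (a - a₁) := by
        intro a _
        obtain ⟨k, hk⟩ := aux_val_diff ((a - a₂) * r) ((a - a₁) * r)
        have hxy : (a - a₂) * r - (a - a₁) * r = (a₁ - a₂) * r := by ring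
        rw [hxy] at hk
        have hcast : (((a - a₂) * r).val : ℝ) - (((a - a₁) * r).val : ℝ)
            = ((((a₁ - a₂) * r).val : ℕ) : ℝ) + N * k := by exact_mod_cast congrArg (fun z : ℤ => (z : ℝ)) hk
        have hgen : ∀ V X Y : ℝ, X - Y = V + N * k →
            (2 * Real.pi * X / N - 2 * Real.pi * Y / N) / 2 = Real.pi * V / N + k * Real.pi := by
          intro V X Y h
          rw [show X = Y + V + N * k by linarith]
          field_simp
          ring
        have hhalf : (θ (a - a₂) - θ (a - a₁)) / 2
            = Real.pi * ((((a₁ - a₂) * r).val : ℕ) : ℝ) / N + k * Real.pi := by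
          simp only [hθdef]
          exact hgen _ _ _ hcast
        have hp := aux_pair u.re u.im (θ (a - a₂)) (θ (a - a₁)) hu1
        rw [hhalf, aux_cos_shift, ← hc] at hp
        simp only [hFdef]
        linarith
      have hlow : (A.card : ℝ) * (2 - 2*c) ≤ ∑ a ∈ A, (F (a - a₂) + F (a - a₁)) := by
        have := Finset.card_nsmul_le_sum A (fun a => F (a - a₂) + F (a - a₁)) (2 - 2*c) hptw
        simpa [nsmul_eq_mul] using this
      have hup : ∑ a ∈ A, (F (a - a₂) + F (a - a₁)) ≤ 2 * (4 * δ^2 * A.card) := by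
        rw [Finset.sum_add_distrib]
        have h1 := aux_sum_sub A ha₂ F hF0
        have h2 := aux_sum_sub A ha₁ F hF0
        linarith [hFsum]
      have hcomb : (2 - 2*c) * (A.card : ℝ) ≤ (8 * δ^2) * A.card := by
        have := le_trans hlow hup
        linarith
      have := le_of_mul_le_mul_right hcomb hn0
      linarith
    by_contra hcon
    push_neg at hcon
    set v := (d * r).val with hv
    have hvN : v < N := ZMod.val_lt _
    set w : ℕ := min v (N - v) with hw
    have h2w : 2 * w ≤ N := by omega
    have hwle : (w : ℝ) / N ≤ 1/2 := by
      rw [div_le_iff₀ hN0]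
      have : (2 : ℝ) * w ≤ N := by exact_mod_cast h2w
      linarith
    have habs_eq : |Real.cos (Real.pi * (v : ℝ) / N)| = Real.cos (Real.pi * ((w:ℝ) / N)) := by
      have hq : 0 ≤ Real.cos (Real.pi * ((w:ℝ) / N)) := by
        apply Real.cos_nonneg_of_mem_Icc
        rw [Set.mem_Icc]
        constructor
        · have h01 : (0:ℝ) ≤ Real.pi * ((w:ℝ)/N) := by positivity
          linarith [Real.pi_pos]
        · nlinarith [Real.pi_pos, hwle]
      rcases le_or_gt (2*v) N with h1 | h1
      · have : w = v := by omega
        rw [this] at hq ⊢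
        rw [show Real.pi * (v:ℝ) / N = Real.pi * ((v:ℝ)/N) by ring]
        exact _root_.abs_of_nonneg hq
      · have hwv : w = N - v := by omega
        have hsub : Real.pi * (v : ℝ) / N = Real.pi - Real.pi * ((w:ℝ)/N) := by
          rw [hwv]
          have hcast : ((N - v : ℕ) : ℝ) = (N:ℝ) - v := Nat.cast_sub (le_of_lt hvN)
          rw [hcast]
          field_simp
          ring
        rw [hsub, Real.cos_pi_sub, abs_neg, _root_.abs_of_nonneg hq]
    rw [hv] at step1
    rw [habs_eq] at step1
    -- now δ ≤ w/N (from hcon) contradiction with aux_delta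
    have hδw : δ ≤ (w:ℝ)/N := by
      rw [le_div_iff₀ hN0]
      calc δ * N ≤ (w : ℝ) := hcon
        _ = (w:ℝ) := rfl
    have hmono : Real.cos (Real.pi * ((w:ℝ)/N)) ≤ Real.cos (Real.pi * δ) := by
      apply Real.cos_le_cos_of_nonneg_of_le_pi
      · positivity
      · nlinarith [Real.pi_pos, hwle]
      · nlinarith [Real.pi_pos, hδw]
    have := aux_delta δ hδ hδ1
    linarith
  -- final assembly
  obtain ⟨a₀, ha₀⟩ := hA
  set s : ZMod N → ℤ := fun a => ((a - a₀) * r).valMinAbs with hs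
  have hsbound : ∀ a ∈ A, (|s a| : ℝ) < δ * N := by
    intro a ha
    have hd : a - a₀ ∈ A - A := Finset.sub_mem_sub ha ha₀
    have hk := key _ hd
    have hnat : (s a).natAbs = min (((a - a₀) * r).val) (N - ((a - a₀) * r).val) :=
      ZMod.valMinAbs_natAbs_eq_min _
    have habs2 : |((s a : ℤ) : ℝ)| = (((s a).natAbs : ℕ) : ℝ) := by
      rw [Nat.cast_natAbs, Int.cast_abs]
    rw [habs2, hnat]
    exact_mod_cast hk
  obtain ⟨am, ham, hmin⟩ := Finset.exists_min_image A s ⟨a₀, ha₀⟩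
  have hceil1 : 1 ≤ ⌈δ * N⌉₊ := by
    rw [Nat.one_le_iff_ne_zero]
    intro h
    have := Nat.ceil_eq_zero.mp h
    nlinarith
  refine ⟨⌈δ * N⌉₊ - 1, ?_, am, r⁻¹, ?_⟩
  · have h2 : (⌈δ * N⌉₊ : ℝ) < δ * N + 1 := Nat.ceil_lt_add_one (by positivity)
    have h3 : ((⌈δ * N⌉₊ - 1 : ℕ) : ℝ) = (⌈δ * N⌉₊ : ℝ) - 1 := by
      push_cast [hceil1]
      ring
    rw [h3]
    linarith
  · intro a ha
    have hd : a - am ∈ A - A := Finset.sub_mem_sub ha ham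
    have h0le : 0 ≤ s a - s am := by linarith [hmin a ha]
    have hcast : ((s a - s am : ℤ) : ZMod N) = (a - am) * r := by
      simp only [hs]
      rw [Int.cast_sub, ZMod.coe_valMinAbs, ZMod.coe_valMinAbs]
      ring
    set w : ℕ := (s a - s am).toNat with hwdef
    have hwz : (w : ℤ) = s a - s am := Int.toNat_of_nonneg h0le
    have hw2 : (w : ℝ) < 2 * (δ * N) := by
      have h1 := hsbound a ha
      have h2 := hsbound am ham
      have : ((s a - s am : ℤ) : ℝ) < 2 * (δ * N) := by
        push_cast
        push_cast at h1 h2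
        have h3 := le_abs_self ((s a : ℝ))
        have h4 := neg_abs_le ((s am : ℝ))
        linarith
      rw [← hwz] at this
      exact_mod_cast this
    have hwN : w < N := by
      have : (w : ℝ) < N := by nlinarith
      exact_mod_cast this
    have hvalw : ((a - am) * r).val = w := by
      have : ((w : ℕ) : ZMod N) = (a - am) * r := by
        rw [← hcast, ← hwz]
        push_cast
        ring
      rw [← this, ZMod.val_cast_of_lt hwN]
    have hkey := key _ hd
    rw [hvalw] at hkey
    have hwreal : (w : ℝ) < δ * N := by
      rcases le_or_gt ((w:ℝ)) (δ * N) with h | h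
      · rcases eq_or_lt_of_le h with h' | h'
        · -- w = δN: then min(w, N-w): if min = w then hkey gives w < δN contra eq; else N - w < δN
          by_contra _
          rcases le_or_gt w (N - w) with hm | hm
          · rw [min_eq_left hm] at hkey; linarith
          · rw [min_eq_right (le_of_lt hm)] at hkey
            have hcast2 : ((N - w : ℕ) : ℝ) = (N:ℝ) - w := Nat.cast_sub (le_of_lt hwN)
            rw [hcast2] at hkey
            nlinarith
        · exact h'
      · exfalso
        rcases le_or_gt w (N - w) with hm | hm
        · rw [min_eq_left hm] at hkey; linarith
        · rw [min_eq_right (le_of_lt hm)] at hkey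
          have hcast2 : ((N - w : ℕ) : ℝ) = (N:ℝ) - w := Nat.cast_sub (le_of_lt hwN)
          rw [hcast2] at hkey
          nlinarith
    rw [Finset.mem_image]
    refine ⟨w, Finset.mem_range.mpr ?_, ?_⟩
    · have : w < ⌈δ * N⌉₊ := Nat.lt_ceil.mpr hwreal
      omega
    · have hww : ((w : ℕ) : ZMod N) = (a - am) * r := by
        rw [← hcast, ← hwz]
        push_cast
        ring
      have : am + (w : ZMod N) * r⁻¹ = am + ((a - am) * r) * r⁻¹ := by rw [hww]
      rw [this, mul_assoc, mul_inv_cancel₀ hr, mul_one]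
      ring
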